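/- Let q > 1 and set q' = q/(q-1). For each integer n ≥ 3 define g_n on the interval I = (0, 1/e) by g_n(r) = (ln n)^{1/q} for 0 < r ≤ 1/n and g_n(r) = ln(1/r) / (ln n)^{1/q'} for 1/n ≤ r < 1/e. Then lim_{n → ∞} ∬_{{(r_1, r_2) ∈ I × I : |g_n(r_1) - g_n(r_2)| > 1}} |r_1 - r_2|^{-2} dr_1 dr_2 = 0. -/

import Mathlib

open MeasureTheory Real Filter ENNReal

set_option linter.unusedVariables false

noncomputable def badF (E ν x y : ℝ) : ℝ≥0∞ :=
  if E / ν ≤ x ∧ E * y ≤ x then ENNReal.ofReal (4 / x ^ 2) else 0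

lemma badF_meas (E ν : ℝ) : Measurable (Function.uncurry (badF E ν)) := by
  unfold badF Function.uncurry
  refine Measurable.ite ?_ (by fun_prop) measurable_const
  exact (measurableSet_le measurable_const measurable_fst).inter
    (measurableSet_le (measurable_const.mul measurable_snd) measurable_fst)

lemma badF_meas_left (E ν x : ℝ) : Measurable (fun y => badF E ν x y) :=
  (badF_meas E ν).comp measurable_prodMk_left

lemma badF_meas_right (E ν y : ℝ) : Measurable (fun x => badF E ν x y) :=
  (badF_meas E ν).comp measurable_prodMk_right

lemma inner_bound (E ν : ℝ) (hE : 0 < E) (hν : 0 < ν) (x : ℝ) :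
    ∫⁻ y in Set.Ioo (0:ℝ) (1 / Real.exp 1), badF E ν x y ≤
      if E / ν ≤ x then ENNReal.ofReal (4 / (E * x)) else 0 := by
  by_cases hx : E / ν ≤ x
  · have hx0 : 0 < x := lt_of_lt_of_le (by positivity) hx
    simp only [hx, if_pos]
    have hrw : ∀ y, badF E ν x y =
        (Set.Iic (x / E)).indicator (fun _ => ENNReal.ofReal (4 / x ^ 2)) y := by
      intro y
      unfold badF
      by_cases hy : E * y ≤ x
      · rw [if_pos ⟨hx, hy⟩, Set.indicator_of_mem (by simpa [Set.mem_Iic] using (le_div_iff₀' hE).2 hy)]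
      · rw [if_neg (by tauto), Set.indicator_of_notMem (by simpa [Set.mem_Iic] using fun h => hy ((le_div_iff₀' hE).1 h))]
    simp only [hrw]
    rw [lintegral_indicator measurableSet_Iic]
    rw [Measure.restrict_restrict measurableSet_Iic, setLIntegral_const]
    have hμ : volume (Set.Iic (x / E) ∩ Set.Ioo (0:ℝ) (1 / Real.exp 1)) ≤
        ENNReal.ofReal (x / E) := by
      refine le_trans (measure_mono (t := Set.Ioc 0 (x / E)) (fun y hy => Set.mem_Ioc.2 ⟨hy.2.1, hy.1⟩)) ?_
      rw [Real.volume_Ioc]; simp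
    calc ENNReal.ofReal (4 / x ^ 2) * volume (Set.Iic (x / E) ∩ Set.Ioo (0:ℝ) (1 / Real.exp 1))
        ≤ ENNReal.ofReal (4 / x ^ 2) * ENNReal.ofReal (x / E) := by
          exact mul_le_mul_right hμ _
      _ = ENNReal.ofReal (4 / x ^ 2 * (x / E)) := (ENNReal.ofReal_mul (by positivity)).symm
      _ = ENNReal.ofReal (4 / (E * x)) := by
          congr 1; field_simp
  · simp only [hx, if_neg, not_false_iff]
    have : ∀ y, badF E ν x y = 0 := fun y => by unfold badF; rw [if_neg (by tauto)]
    simp [this]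

lemma outer_bound (E ν : ℝ) (hE : 1 ≤ E) (hν : 1 ≤ ν) :
    ∫⁻ x in Set.Ioo (0:ℝ) (1 / Real.exp 1),
      (if E / ν ≤ x then ENNReal.ofReal (4 / (E * x)) else 0) ≤
      ENNReal.ofReal (4 / E * Real.log ν) := by
  have hE0 : 0 < E := by linarith
  have hν0 : 0 < ν := by linarith
  set a := E / ν with ha
  set b := (1 : ℝ) / Real.exp 1 with hb
  have ha0 : 0 < a := by positivity
  have hrw : ∀ x, (if E / ν ≤ x then ENNReal.ofReal (4 / (E * x)) else 0) =
      (Set.Ici a).indicator (fun x => ENNReal.ofReal (4 / (E * x))) x := by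
    intro x
    by_cases h : a ≤ x <;> simp [Set.indicator_apply, Set.mem_Ici, h, ← ha]
  simp only [← ha] at hrw; simp only [hrw]
  rw [lintegral_indicator measurableSet_Ici,
    Measure.restrict_restrict measurableSet_Ici]
  have hsub : Set.Ici a ∩ Set.Ioo (0:ℝ) b ⊆ Set.Icc a b := by
    intro x hx; exact ⟨hx.1, le_of_lt hx.2.2⟩
  refine le_trans (lintegral_mono' (Measure.restrict_mono hsub le_rfl) le_rfl) ?_
  by_cases hab : a ≤ b
  · have hInt : IntegrableOn (fun x => 4 / E * x⁻¹) (Set.Icc a b) volume := by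
      apply ContinuousOn.integrableOn_compact isCompact_Icc
      exact continuousOn_const.mul (continuousOn_inv₀.mono
        (fun x hx => ne_of_gt (lt_of_lt_of_le ha0 hx.1)))
    have hnn : 0 ≤ᶠ[ae (volume.restrict (Set.Icc a b))] fun x => 4 / E * x⁻¹ := by
      refine (ae_restrict_iff' measurableSet_Icc).2 (ae_of_all _ (fun x hx => ?_))
      have : 0 < x := lt_of_lt_of_le ha0 hx.1
      positivity
    have heq : ∀ x, ENNReal.ofReal (4 / (E * x)) = ENNReal.ofReal (4 / E * x⁻¹) := by
      intro x; congr 1; field_simp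
    simp only [heq]
    rw [← ofReal_integral_eq_lintegral_ofReal hInt hnn]
    apply ENNReal.ofReal_le_ofReal
    rw [MeasureTheory.integral_const_mul, integral_Icc_eq_integral_Ioc,
      ← intervalIntegral.integral_of_le hab,
      integral_inv (by
        rw [Set.uIcc_of_le hab]
        exact fun h => absurd h.1 (not_le.2 ha0))]
    have hba : Real.log (b / a) ≤ Real.log ν := by
      apply Real.log_le_log (by positivity)
      rw [hb, ha]
      rw [div_le_iff₀ (by positivity)]
      have h1 : (1:ℝ) / Real.exp 1 ≤ 1 := by
        rw [div_le_one (Real.exp_pos 1)]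
        have := Real.add_one_le_exp 1; linarith
      have h2 : (1:ℝ) ≤ E / ν * ν := by
        rw [div_mul_cancel₀ _ (ne_of_gt hν0)]; exact hE
      linarith
    have h4E : 0 ≤ 4 / E := by positivity
    calc 4 / E * Real.log (b / a) ≤ 4 / E * Real.log ν := by
          exact mul_le_mul_of_nonneg_left hba h4E
      _ = 4 / E * Real.log ν := rfl
  · rw [Set.Icc_eq_empty hab, Measure.restrict_empty, lintegral_zero_measure]
    exact zero_le


lemma point_bound (E x y : ℝ) (hE2 : 2 ≤ E) (hy : 0 < y) (hcond : E * y ≤ x) :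
    ENNReal.ofReal (|y - x| ^ (-(2:ℝ))) ≤ ENNReal.ofReal (4 / x ^ 2) := by
  have hx0 : 0 < x := lt_of_lt_of_le (by nlinarith) hcond
  have hxy : x / 2 ≤ x - y := by nlinarith
  have hxy0 : 0 < x - y := lt_of_lt_of_le (by positivity) hxy
  apply ENNReal.ofReal_le_ofReal
  have habs : |y - x| = x - y := by rw [abs_sub_comm, abs_of_pos hxy0]
  rw [habs]
  have hrpow : (x - y) ^ (-(2:ℝ)) = ((x - y) ^ (2:ℕ))⁻¹ := by
    rw [Real.rpow_neg (le_of_lt hxy0), ← Real.rpow_natCast (x - y) 2]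
    norm_num
  rw [hrpow]
  have hle : x ^ 2 / 4 ≤ (x - y) ^ (2:ℕ) := by nlinarith
  calc ((x - y) ^ (2:ℕ))⁻¹ ≤ (x ^ 2 / 4)⁻¹ := by
        apply inv_anti₀ (by positivity) hle
    _ = 4 / x ^ 2 := by rw [inv_div]

lemma helper_mixed (q q' l ν r s : ℝ) (hq : 1 < q) (h1q' : 1/q' = 1 - 1/q)
    (hν : 3 ≤ ν) (hl : l = Real.log ν)
    (hr0 : 0 < r) (hr : r ≤ 1/ν) (hs1 : 1/ν < s) (hs2 : s < 1/Real.exp 1)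
    (hcond : 1 < |l ^ (1/q) - Real.log (1/s) / l ^ (1/q')|) :
    Real.exp (l ^ (1/q')) / ν ≤ s ∧ Real.exp (l ^ (1/q')) * r ≤ s := by
  have hν0 : (0:ℝ) < ν := by linarith
  have hq'pos : 0 < 1/q' := by
    rw [h1q']
    have : 1/q < 1 := (div_lt_one (by linarith)).2 hq
    linarith
  have hl1 : 1 ≤ l := by
    rw [hl, Real.le_log_iff_exp_le hν0]
    have := Real.exp_one_lt_d9; linarith
  have hl0 : (0:ℝ) < l := by linarith
  set a := l ^ (1/q) with haa
  set L := l ^ (1/q') with hLL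
  have hL1 : 1 ≤ L := Real.one_le_rpow hl1 (le_of_lt hq'pos)
  have hL0 : 0 < L := by linarith
  have haL : a * L = l := by
    rw [haa, hLL, ← Real.rpow_add hl0]
    have : 1/q + 1/q' = 1 := by rw [h1q']; ring
    rw [this, Real.rpow_one]
  have hs0 : 0 < s := lt_trans (by positivity) hs1
  set x := Real.log (1/s) with hxx
  have hx1 : 1 < x := by
    rw [hxx]
    have : Real.exp 1 < 1/s := by
      rw [lt_div_iff₀ hs0]
      calc Real.exp 1 * s < Real.exp 1 * (1/Real.exp 1) := by
            exact mul_lt_mul_of_pos_left hs2 (Real.exp_pos 1)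
        _ = 1 := by field_simp
    calc (1:ℝ) = Real.log (Real.exp 1) := (Real.log_exp 1).symm
      _ < Real.log (1/s) := Real.log_lt_log (Real.exp_pos 1) this
  have hxl : x < l := by
    rw [hxx, hl]
    apply Real.log_lt_log (by positivity)
    rw [div_lt_iff₀ hs0]
    have := (div_lt_iff₀ hν0).1 hs1
    nlinarith
  have hxa : x / L < a := by
    rw [div_lt_iff₀ hL0, haL]; exact hxl
  have habs : |a - x/L| = a - x/L := by
    apply abs_of_pos; linarith
  rw [habs] at hcond
  have hxlL : x < l - L := by
    have hne : L ≠ 0 := ne_of_gt hL0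
    have h1 := mul_lt_mul_of_pos_right hcond hL0
    rw [one_mul, sub_mul, div_mul_cancel₀ _ hne, haL] at h1
    linarith
  have hexp : 1/s < ν / Real.exp L := by
    have h2 : Real.exp x < Real.exp (l - L) := Real.exp_lt_exp.2 hxlL
    rw [Real.exp_sub, hl, Real.exp_log hν0] at h2
    calc 1/s = Real.exp x := by rw [hxx, Real.exp_log (by positivity)]
      _ < ν / Real.exp L := h2
  have hEs : Real.exp L / ν ≤ s := by
    have hE0 : 0 < Real.exp L := Real.exp_pos L
    rw [div_le_iff₀ hν0]
    rw [div_lt_div_iff₀ (by positivity) hE0] at hexp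
    nlinarith
  refine ⟨hEs, ?_⟩
  calc Real.exp L * r ≤ Real.exp L * (1/ν) := by
        exact mul_le_mul_of_nonneg_left hr (le_of_lt (Real.exp_pos L))
    _ = Real.exp L / ν := by ring
    _ ≤ s := hEs

lemma helper_both (L ν u v : ℝ) (hν : 0 < ν) (hu0 : 0 < u) (hv0 : 0 < v)
    (hu : ¬ u ≤ 1/ν) (hcond : L < Real.log (1/u) - Real.log (1/v)) :
    Real.exp L / ν ≤ v ∧ Real.exp L * u ≤ v := by
  push_neg at hu
  have h2 : Real.exp L / v < 1 / u := by
    have h3 := Real.exp_lt_exp.2 (by linarith : L + Real.log (1/v) < Real.log (1/u))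
    rwa [Real.exp_add, Real.exp_log (by positivity), Real.exp_log (by positivity),
      mul_one_div] at h3
  have hE0 : 0 < Real.exp L := Real.exp_pos L
  have huv : Real.exp L * u ≤ v := by
    rw [div_lt_div_iff₀ hv0 hu0] at h2
    nlinarith
  refine ⟨?_, huv⟩
  have h4 : Real.exp L / ν < Real.exp L * u := by
    rw [div_lt_iff₀ hν]
    have h5 := (div_lt_iff₀ hν).1 hu
    nlinarith
  linarith

lemma key (q q' l ν : ℝ) (hq : 1 < q) (h1q' : 1/q' = 1 - 1/q)
    (hν : 3 ≤ ν) (hl : l = Real.log ν) {r₁ r₂ : ℝ}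
    (h₁ : r₁ ∈ Set.Ioo (0:ℝ) (1/Real.exp 1)) (h₂ : r₂ ∈ Set.Ioo (0:ℝ) (1/Real.exp 1))
    (hcond : 1 < |(if r₁ ≤ 1/ν then l ^ (1/q) else Real.log (1/r₁) / l ^ (1/q')) -
       (if r₂ ≤ 1/ν then l ^ (1/q) else Real.log (1/r₂) / l ^ (1/q'))|) :
    (Real.exp (l ^ (1/q')) / ν ≤ r₂ ∧ Real.exp (l ^ (1/q')) * r₁ ≤ r₂) ∨
    (Real.exp (l ^ (1/q')) / ν ≤ r₁ ∧ Real.exp (l ^ (1/q')) * r₂ ≤ r₁) := by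
  have hν0 : (0:ℝ) < ν := by linarith
  have hl1 : 1 ≤ l := by
    rw [hl, Real.le_log_iff_exp_le hν0]
    have := Real.exp_one_lt_d9; linarith
  have hL0 : 0 < l ^ (1/q') := by
    apply Real.rpow_pos_of_pos; linarith
  by_cases hA : r₁ ≤ 1/ν <;> by_cases hB : r₂ ≤ 1/ν
  · rw [if_pos hA, if_pos hB] at hcond; simp at hcond; linarith
  · rw [if_pos hA, if_neg hB] at hcond
    exact Or.inl (helper_mixed q q' l ν r₁ r₂ hq h1q' hν hl h₁.1 hA
      (not_le.1 hB) h₂.2 hcond)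
  · rw [if_neg hA, if_pos hB, abs_sub_comm] at hcond
    exact Or.inr (helper_mixed q q' l ν r₂ r₁ hq h1q' hν hl h₂.1 hB
      (not_le.1 hA) h₁.2 hcond)
  · rw [if_neg hA, if_neg hB] at hcond
    set L := l ^ (1/q') with hLL
    have hne : L ≠ 0 := ne_of_gt hL0
    rcases lt_abs.1 hcond with h | h
    · left
      apply helper_both L ν r₁ r₂ hν0 h₁.1 h₂.1 hA
      have h1 := mul_lt_mul_of_pos_right h hL0
      rwa [one_mul, sub_mul, div_mul_cancel₀ _ hne, div_mul_cancel₀ _ hne] at h1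
    · right
      apply helper_both L ν r₂ r₁ hν0 h₂.1 h₁.1 hB
      rw [neg_sub] at h
      have h1 := mul_lt_mul_of_pos_right h hL0
      rwa [one_mul, sub_mul, div_mul_cancel₀ _ hne, div_mul_cancel₀ _ hne] at h1

lemma main_est (q q' : ℝ) (hq : 1 < q) (h1q' : 1/q' = 1 - 1/q) (n : ℕ) (hn : 3 ≤ n) :
    (∫⁻ r₁ in Set.Ioo (0 : ℝ) (1 / Real.exp 1),
          ∫⁻ r₂ in Set.Ioo (0 : ℝ) (1 / Real.exp 1),
            (if 1 <
                |(if r₁ ≤ 1 / (n : ℝ) then (Real.log n) ^ (1 / q)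
                  else Real.log (1 / r₁) / (Real.log n) ^ (1 / q')) -
                 (if r₂ ≤ 1 / (n : ℝ) then (Real.log n) ^ (1 / q)
                  else Real.log (1 / r₂) / (Real.log n) ^ (1 / q'))| then
              ENNReal.ofReal (|r₁ - r₂| ^ (-(2 : ℝ))) else 0)) ≤
      ENNReal.ofReal (8 / Real.exp ((Real.log n) ^ (1 / q')) * Real.log n) := by
  set I := Set.Ioo (0 : ℝ) (1 / Real.exp 1) with hI
  set ν := (n : ℝ) with hνdef
  have hν3 : (3:ℝ) ≤ ν := by rw [hνdef]; exact_mod_cast hn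
  have hν0 : (0:ℝ) < ν := by linarith
  set l := Real.log ν with hldef
  have hl1 : 1 ≤ l := by
    rw [hldef, Real.le_log_iff_exp_le hν0]
    have := Real.exp_one_lt_d9; linarith
  have hlnn : (0:ℝ) ≤ l := by linarith
  set L := l ^ (1/q') with hLdef
  have hq'pos : 0 < 1/q' := by
    rw [h1q']
    have : 1/q < 1 := (div_lt_one (by linarith)).2 hq
    linarith
  have hL1 : 1 ≤ L := Real.one_le_rpow hl1 (le_of_lt hq'pos)
  set E := Real.exp L with hEdef
  have hE2 : 2 ≤ E := by
    have h1 : (2:ℝ) ≤ Real.exp 1 := by have := Real.add_one_le_exp 1; linarith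
    have h2 : Real.exp 1 ≤ E := Real.exp_le_exp.2 hL1
    linarith
  have hE1 : (1:ℝ) ≤ E := by linarith
  have hE0 : (0:ℝ) < E := by linarith
  have hA₁meas : Measurable fun r₁ => ∫⁻ r₂ in I, badF E ν r₂ r₁ := by
    exact Measurable.lintegral_prod_right' ((badF_meas E ν).comp measurable_swap)
  have hswapmeas : AEMeasurable (Function.uncurry fun x y => badF E ν y x)
      ((volume.restrict I).prod (volume.restrict I)) :=
    ((badF_meas E ν).comp measurable_swap).aemeasurable
  calc (∫⁻ r₁ in I, ∫⁻ r₂ in I,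
        (if 1 < |(if r₁ ≤ 1 / ν then l ^ (1 / q) else Real.log (1 / r₁) / l ^ (1 / q')) -
              (if r₂ ≤ 1 / ν then l ^ (1 / q) else Real.log (1 / r₂) / l ^ (1 / q'))| then
            ENNReal.ofReal (|r₁ - r₂| ^ (-(2 : ℝ))) else 0))
      ≤ ∫⁻ r₁ in I, ∫⁻ r₂ in I, (badF E ν r₂ r₁ + badF E ν r₁ r₂) := by
        refine setLIntegral_mono' measurableSet_Ioo (fun r₁ h₁ => ?_)
        refine setLIntegral_mono' measurableSet_Ioo (fun r₂ h₂ => ?_)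
        by_cases hc : 1 < |(if r₁ ≤ 1 / ν then l ^ (1 / q) else Real.log (1 / r₁) / l ^ (1 / q')) -
              (if r₂ ≤ 1 / ν then l ^ (1 / q) else Real.log (1 / r₂) / l ^ (1 / q'))|
        case neg => rw [if_neg hc]; exact zero_le
        rw [if_pos hc]
        · rcases key q q' l ν hq h1q' hν3 hldef h₁ h₂ hc with ⟨ha, hb⟩ | ⟨ha, hb⟩
          · calc ENNReal.ofReal (|r₁ - r₂| ^ (-(2:ℝ)))
                ≤ ENNReal.ofReal (4 / r₂ ^ 2) := point_bound E r₂ r₁ hE2 h₁.1 hb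
              _ = badF E ν r₂ r₁ := by rw [badF, if_pos ⟨ha, hb⟩]
              _ ≤ _ := le_self_add
          · calc ENNReal.ofReal (|r₁ - r₂| ^ (-(2:ℝ)))
                = ENNReal.ofReal (|r₂ - r₁| ^ (-(2:ℝ))) := by rw [abs_sub_comm]
              _ ≤ ENNReal.ofReal (4 / r₁ ^ 2) := point_bound E r₁ r₂ hE2 h₂.1 hb
              _ = badF E ν r₁ r₂ := by rw [badF, if_pos ⟨ha, hb⟩]
              _ ≤ _ := le_add_self
    _ = (∫⁻ r₁ in I, ∫⁻ r₂ in I, badF E ν r₂ r₁) +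
          ∫⁻ r₁ in I, ∫⁻ r₂ in I, badF E ν r₁ r₂ := by
        have hin : ∀ r₁, (∫⁻ r₂ in I, (badF E ν r₂ r₁ + badF E ν r₁ r₂)) =
            (∫⁻ r₂ in I, badF E ν r₂ r₁) + ∫⁻ r₂ in I, badF E ν r₁ r₂ := fun r₁ =>
          lintegral_add_left (badF_meas_right E ν r₁) _
        simp only [hin]
        exact lintegral_add_left hA₁meas _
    _ = (∫⁻ r₁ in I, ∫⁻ r₂ in I, badF E ν r₁ r₂) +
          ∫⁻ r₁ in I, ∫⁻ r₂ in I, badF E ν r₁ r₂ := by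
        rw [lintegral_lintegral_swap hswapmeas]
    _ ≤ ENNReal.ofReal (4 / E * l) + ENNReal.ofReal (4 / E * l) := by
        have hstep : (∫⁻ r₁ in I, ∫⁻ r₂ in I, badF E ν r₁ r₂) ≤
            ENNReal.ofReal (4 / E * l) := by
          refine le_trans (lintegral_mono (fun x => inner_bound E ν hE0 hν0 x)) ?_
          rw [hldef]
          exact outer_bound E ν hE1 (by linarith)
        exact add_le_add hstep hstep
    _ = ENNReal.ofReal (8 / E * l) := by
        rw [← ENNReal.ofReal_add (mul_nonneg (by positivity) hlnn)
          (mul_nonneg (by positivity) hlnn)]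
        congr 1; ring

theorem stmt19 (q : ℝ) (hq : 1 < q) (q' : ℝ) (hq' : q' = q / (q - 1)) :
    Tendsto (fun n : ℕ =>
        ∫⁻ r₁ in Set.Ioo (0 : ℝ) (1 / Real.exp 1),
          ∫⁻ r₂ in Set.Ioo (0 : ℝ) (1 / Real.exp 1),
            (if 1 <
                |(if r₁ ≤ 1 / (n : ℝ) then (Real.log n) ^ (1 / q)
                  else Real.log (1 / r₁) / (Real.log n) ^ (1 / q')) -
                 (if r₂ ≤ 1 / (n : ℝ) then (Real.log n) ^ (1 / q)
                  else Real.log (1 / r₂) / (Real.log n) ^ (1 / q'))| then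
              ENNReal.ofReal (|r₁ - r₂| ^ (-(2 : ℝ))) else 0))
      atTop (nhds 0) := by
  have hq0 : (0:ℝ) < q := by linarith
  have h1q' : 1/q' = 1 - 1/q := by
    rw [hq']; field_simp
  have hq'pos : 0 < 1/q' := by
    rw [h1q']
    have : 1/q < 1 := (div_lt_one hq0).2 hq
    linarith
  have hq'0 : 0 < q' := one_div_pos.mp hq'pos
  have hcq' : (1/q') * q' = 1 := by field_simp
  -- the upper bound sequence tends to 0
  have hupper : Tendsto (fun n : ℕ =>
      ENNReal.ofReal (8 / Real.exp ((Real.log n) ^ (1 / q')) * Real.log n)) atTop (nhds 0) := by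
    have hreal : Tendsto (fun n : ℕ =>
        8 / Real.exp ((Real.log n) ^ (1 / q')) * Real.log n) atTop (nhds 0) := by
      have h0 : Tendsto (fun y : ℝ => 8 * (y ^ q' * Real.exp (-1 * y))) atTop (nhds (8 * 0)) :=
        (tendsto_rpow_mul_exp_neg_mul_atTop_nhds_zero q' 1 one_pos).const_mul 8
      have hcomp : Tendsto (fun n : ℕ => (Real.log n) ^ (1/q')) atTop atTop :=
        (tendsto_rpow_atTop hq'pos).comp (Real.tendsto_log_atTop.comp tendsto_natCast_atTop_atTop)
      have h1 : Tendsto (fun n : ℕ =>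
          8 * (((Real.log n) ^ (1/q')) ^ q' * Real.exp (-1 * (Real.log n) ^ (1/q'))))
          atTop (nhds (8 * 0)) := h0.comp hcomp
      rw [mul_zero] at h1
      refine h1.congr' ?_
      filter_upwards [eventually_ge_atTop 3] with n hn
      have hn3 : (3:ℝ) ≤ (n:ℝ) := by exact_mod_cast hn
      have hl0 : (0:ℝ) ≤ Real.log n := Real.log_nonneg (by linarith)
      rw [← Real.rpow_mul hl0, hcq', Real.rpow_one, neg_one_mul, Real.exp_neg]
      ring
    have := ENNReal.tendsto_ofReal hreal
    simpa using this
  refine tendsto_of_tendsto_of_tendsto_of_le_of_le' tendsto_const_nhds hupper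
    (Eventually.of_forall (fun n => zero_le)) ?_
  filter_upwards [eventually_ge_atTop 3] with n hn
  exact main_est q q' hq h1q' n hn
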